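/- Let k ≥ 1 be an integer and let μ be a nice measure on ℝ². Then there exists a convex partition of ℝ² into 2k + 2 parts, each of μ-measure 1/(2k+2), such that every line in ℝ² avoids at least k of the parts. -/

import Mathlib

open MeasureTheory Set Metric
open scoped ENNReal
noncomputable section

abbrev Euc (d : ℕ) := EuclideanSpace ℝ (Fin d)

/-- A nice measure on ℝ^d: a probability measure with a continuous,
strictly positive density with respect to Lebesgue measure. -/
def NiceMeasure (d : ℕ) (μ : Measure (Euc d)) : Prop :=
  IsProbabilityMeasure μ ∧ ∃ f : Euc d → ℝ, Continuous f ∧ (∀ x, 0 < f x) ∧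
    μ = volume.withDensity (fun x => ENNReal.ofReal (f x))

/-- The affine hyperplane with normal vector `v` and offset `c`. -/
def Hyperplane {d : ℕ} (v : Euc d) (c : ℝ) : Set (Euc d) := {x | inner (𝕜 := ℝ) v x = c}

/-- A set `H` avoids a set `C` if `H` is disjoint from the interior of `C`. -/
def Avoids {d : ℕ} (H C : Set (Euc d)) : Prop := H ∩ interior C = ∅

/-- A convex partition of ℝ^d into `n` parts: `n` closed convex sets with pairwise
disjoint interiors whose union is all of ℝ^d. -/
def IsConvexPartition {d n : ℕ} (C : Fin n → Set (Euc d)) : Prop :=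
  (∀ i, IsClosed (C i)) ∧ (∀ i, Convex ℝ (C i)) ∧
  (∀ i j, i ≠ j → interior (C i) ∩ interior (C j) = ∅) ∧ (⋃ i, C i) = univ

/-- A `k`-equipartition of `μ` into `n` parts: a convex partition into `n` parts,
each of measure `1/n`, such that every hyperplane avoids at least `k` parts. -/
def IsEquipartition {d n : ℕ} (μ : Measure (Euc d)) (k : ℕ) (C : Fin n → Set (Euc d)) : Prop :=
  IsConvexPartition C ∧ (∀ i, μ (C i) = (n : ℝ≥0∞)⁻¹) ∧
  ∀ v : Euc d, ∀ c : ℝ, v ≠ 0 → k ≤ {i | Avoids (Hyperplane v c) (C i)}.ncard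

/-- Every nice measure on ℝ^d admits a `k`-equipartition into `n` parts. -/
def HasEquipartition (d k n : ℕ) : Prop :=
  ∀ μ : Measure (Euc d), NiceMeasure d μ → ∃ C : Fin n → Set (Euc d), IsEquipartition μ k C

/-- `N_d(k)`: the smallest positive `n` such that every nice measure on ℝ^d admits a
`k`-equipartition into `n` parts. -/
def Nd (d k : ℕ) : ℕ := sInf {n | 0 < n ∧ HasEquipartition d k n}

open Filter Topology
open scoped RealInnerProductSpace

lemma inner2 (v x : Euc 2) : ⟪v, x⟫ = v 0 * x 0 + v 1 * x 1 := by
  simp [PiLp.inner_apply, Fin.sum_univ_two, RCLike.inner_apply, starRingEnd_apply]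
  ring

lemma contInner (v : Euc 2) : Continuous (fun x : Euc 2 => ⟪v, x⟫) :=
  Continuous.inner continuous_const continuous_id

lemma volume_line_eq_zero (v : Euc 2) (hv : v ≠ 0) (c : ℝ) :
    volume {x : Euc 2 | ⟪v, x⟫ = c} = 0 := by
  set L := {x : Euc 2 | ⟪v, x⟫ = c} with hL
  have hconv : Convex ℝ L := by
    intro x hx y hy a b ha hb hab
    simp only [hL, mem_setOf_eq] at *
    rw [inner_add_right, inner_smul_right, inner_smul_right, hx, hy]
    linear_combination c * hab
  have hcl : IsClosed L := IsClosed.preimage (contInner v) isClosed_singleton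
  have hvpos : (0:ℝ) < ‖v‖ := norm_pos_iff.mpr hv
  have hint : interior L = ∅ := by
    by_contra h
    obtain ⟨x, hx⟩ := nonempty_iff_ne_empty.mpr h
    obtain ⟨ε, hε, hball⟩ := Metric.mem_nhds_iff.mp (mem_interior_iff_mem_nhds.mp hx)
    have hxL : x ∈ L := interior_subset hx
    have hyL : x + (ε / (2*‖v‖)) • v ∈ L := by
      apply hball
      simp only [mem_ball, dist_self_add_left, norm_smul, Real.norm_eq_abs]
      rw [abs_of_pos (by positivity)]
      rw [div_mul_eq_mul_div, mul_comm]
      rw [div_lt_iff₀ (by positivity)]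
      nlinarith
    simp only [hL, mem_setOf_eq, inner_add_right, inner_smul_right] at hxL hyL
    rw [hxL, real_inner_self_eq_norm_sq] at hyL
    have : ε / (2*‖v‖) * ‖v‖^2 > 0 := by positivity
    linarith
  have : frontier L = L := by
    rw [frontier, hcl.closure_eq, hint, diff_empty]
  rw [← this]
  exact hconv.addHaar_frontier volume

lemma nice_null {μ : Measure (Euc 2)} (hμ : NiceMeasure 2 μ) {S : Set (Euc 2)}
    (hS : volume S = 0) : μ S = 0 := by
  obtain ⟨_, f, _, _, heq⟩ := hμ
  rw [heq]
  exact withDensity_absolutelyContinuous volume _ hS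

lemma line_null {μ : Measure (Euc 2)} (hμ : NiceMeasure 2 μ) {v : Euc 2} (hv : v ≠ 0) (c : ℝ) :
    μ {x : Euc 2 | ⟪v, x⟫ = c} = 0 :=
  nice_null hμ (volume_line_eq_zero v hv c)

lemma nice_pos {μ : Measure (Euc 2)} (hμ : NiceMeasure 2 μ) {U : Set (Euc 2)}
    (hU : IsOpen U) (hne : U.Nonempty) : μ U ≠ 0 := by
  obtain ⟨_, f, hfc, hfp, heq⟩ := hμ
  rw [heq, withDensity_apply _ hU.measurableSet]
  intro h
  rw [setLIntegral_eq_zero_iff hU.measurableSet hfc.measurable.ennreal_ofReal] at h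
  have h2 := ae_iff.mp h
  have hset : {a | ¬(a ∈ U → ENNReal.ofReal (f a) = 0)} = U := by
    ext x
    simp only [mem_setOf_eq, _root_.not_imp, and_iff_left_iff_imp]
    intro _
    exact (ENNReal.ofReal_pos.mpr (hfp x)).ne'
  rw [hset] at h2
  exact hU.measure_ne_zero volume hne h2


lemma halfplane_closed (ν : Euc 2) (s : ℝ) : IsClosed {x : Euc 2 | ⟪ν, x⟫ ≤ s} :=
  isClosed_le (contInner ν) continuous_const

lemma measA_cont {μ : Measure (Euc 2)} (hμ : NiceMeasure 2 μ) {R : Set (Euc 2)}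
    (hR : MeasurableSet R) {p : Euc 2 × ℝ} (hp : p.1 ≠ 0) :
    ContinuousAt (fun q : Euc 2 × ℝ => (μ (R ∩ {x | ⟪q.1, x⟫ ≤ q.2})).toReal) p := by
  haveI : IsProbabilityMeasure μ := hμ.1
  rw [ContinuousAt, Filter.tendsto_iff_seq_tendsto]
  intro u hu
  have h1 : Filter.Tendsto (fun n => (u n).1) Filter.atTop (𝓝 p.1) :=
    ((continuous_fst.tendsto p).comp hu)
  have h2 : Filter.Tendsto (fun n => (u n).2) Filter.atTop (𝓝 p.2) :=
    ((continuous_snd.tendsto p).comp hu)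
  have hmeas : ∀ (q : Euc 2 × ℝ), MeasurableSet (R ∩ {x : Euc 2 | ⟪q.1, x⟫ ≤ q.2}) :=
    fun q => hR.inter (halfplane_closed q.1 q.2).measurableSet
  have key : ∀ (q : Euc 2 × ℝ), (μ (R ∩ {x | ⟪q.1, x⟫ ≤ q.2})).toReal
      = ∫ x, (R ∩ {x : Euc 2 | ⟪q.1, x⟫ ≤ q.2}).indicator (fun _ => (1:ℝ)) x ∂μ := by
    intro q
    rw [MeasureTheory.integral_indicator_const (1:ℝ) (hmeas q), smul_eq_mul, mul_one, measureReal_def]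
  simp only [Function.comp_def, key]
  apply MeasureTheory.tendsto_integral_of_dominated_convergence (fun _ => (1:ℝ))
  · intro n
    exact (stronglyMeasurable_const.indicator (hmeas (u n))).aestronglyMeasurable
  · exact integrable_const 1
  · intro n
    filter_upwards with x
    calc ‖(R ∩ {x : Euc 2 | ⟪(u n).1, x⟫ ≤ (u n).2}).indicator (fun _ => (1:ℝ)) x‖
        ≤ ‖(1:ℝ)‖ := norm_indicator_le_norm_self _ _
      _ = 1 := norm_one
  · have hae : ∀ᵐ x ∂μ, ⟪p.1, x⟫ ≠ p.2 := by
      rw [ae_iff]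
      have : {x : Euc 2 | ¬ ⟪p.1, x⟫ ≠ p.2} = {x : Euc 2 | ⟪p.1, x⟫ = p.2} := by
        ext x; simp
      rw [this]
      exact line_null hμ hp p.2
    filter_upwards [hae] with x hx
    by_cases hxR : x ∈ R
    · have hin : Filter.Tendsto (fun n => ⟪(u n).1, x⟫ - (u n).2) Filter.atTop
          (𝓝 (⟪p.1, x⟫ - p.2)) :=
        Filter.Tendsto.sub (Filter.Tendsto.inner h1 tendsto_const_nhds) h2
      rcases lt_or_gt_of_ne hx with hlt | hgt
      · have hev : ∀ᶠ n in Filter.atTop, ⟪(u n).1, x⟫ - (u n).2 < 0 :=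
          hin.eventually_lt_const (show ⟪p.1, x⟫ - p.2 < 0 by linarith)
        have hfx : (R ∩ {y : Euc 2 | ⟪p.1, y⟫ ≤ p.2}).indicator (fun _ => (1:ℝ)) x = 1 :=
          Set.indicator_of_mem
            (show x ∈ R ∩ {y : Euc 2 | ⟪p.1, y⟫ ≤ p.2} from ⟨hxR, le_of_lt hlt⟩) _
        rw [hfx]
        refine Filter.Tendsto.congr' ?_ (tendsto_const_nhds :
          Filter.Tendsto (fun _ : ℕ => (1:ℝ)) Filter.atTop (𝓝 1))
        filter_upwards [hev] with n hn
        exact (Set.indicator_of_mem (show x ∈ R ∩ {y : Euc 2 | ⟪(u n).1, y⟫ ≤ (u n).2} from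
          ⟨hxR, show ⟪(u n).1, x⟫ ≤ (u n).2 by linarith⟩) (fun _ => (1:ℝ))).symm
      · have hev : ∀ᶠ n in Filter.atTop, (0:ℝ) < ⟪(u n).1, x⟫ - (u n).2 :=
          hin.eventually_const_lt (show (0:ℝ) < ⟪p.1, x⟫ - p.2 by linarith)
        have hfx : (R ∩ {y : Euc 2 | ⟪p.1, y⟫ ≤ p.2}).indicator (fun _ => (1:ℝ)) x = 0 := by
          apply indicator_of_notMem
          rintro ⟨-, hc⟩
          simp only [mem_setOf_eq] at hc
          linarith
        rw [hfx]
        refine Filter.Tendsto.congr' ?_ (tendsto_const_nhds :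
          Filter.Tendsto (fun _ : ℕ => (0:ℝ)) Filter.atTop (𝓝 0))
        filter_upwards [hev] with n hn
        symm
        apply Set.indicator_of_notMem
        rintro ⟨-, hc⟩
        simp only [mem_setOf_eq] at hc
        linarith
    · have : ∀ q : Euc 2 × ℝ, (R ∩ {y : Euc 2 | ⟪q.1, y⟫ ≤ q.2}).indicator
          (fun _ => (1:ℝ)) x = 0 := fun q => indicator_of_notMem (fun hc => hxR hc.1) _
      simp only [this]
      exact tendsto_const_nhds

lemma cut_strict {μ : Measure (Euc 2)} (hμ : NiceMeasure 2 μ) {R : Set (Euc 2)}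
    (hRconv : Convex ℝ R) (hRcl : IsClosed R) {ν : Euc 2} (hν : ν ≠ 0) {s s' : ℝ}
    (hss : s < s') (h0 : μ (R ∩ {x | ⟪ν, x⟫ ≤ s}) ≠ 0)
    (hRne : μ (R ∩ {x | ⟪ν, x⟫ ≤ s'}) ≠ μ R) :
    μ (R ∩ {x | ⟪ν, x⟫ ≤ s}) < μ (R ∩ {x | ⟪ν, x⟫ ≤ s'}) := by
  haveI : IsProbabilityMeasure μ := hμ.1
  have hfr : μ (frontier R) = 0 := nice_null hμ (hRconv.addHaar_frontier volume)
  have hfr' : R \ interior R ⊆ frontier R := fun x hx => ⟨hRcl.closure_eq.symm ▸ hx.1, hx.2⟩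
  -- find a ∈ interior R with ⟪ν,a⟫ < s
  have ha : (interior R ∩ {x : Euc 2 | ⟪ν, x⟫ < s}).Nonempty := by
    rcases eq_or_ne (μ (interior R ∩ {x : Euc 2 | ⟪ν, x⟫ < s})) 0 with hz | hnz
    · exfalso
      apply h0
      have hsub : R ∩ {x : Euc 2 | ⟪ν, x⟫ ≤ s} ⊆
          (interior R ∩ {x : Euc 2 | ⟪ν, x⟫ < s}) ∪ (frontier R ∪ {x : Euc 2 | ⟪ν, x⟫ = s}) := by
        rintro x ⟨hxR, hxs⟩
        have hxs' : ⟪ν, x⟫ ≤ s := hxs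
        rcases eq_or_lt_of_le hxs' with he | hl
        · exact Or.inr (Or.inr he)
        rcases em (x ∈ interior R) with hi | hni
        · exact Or.inl ⟨hi, hl⟩
        · exact Or.inr (Or.inl (hfr' ⟨hxR, hni⟩))
      refine le_antisymm ?_ (zero_le)
      calc μ (R ∩ {x : Euc 2 | ⟪ν, x⟫ ≤ s}) ≤ _ := measure_mono hsub
        _ ≤ μ (interior R ∩ {x : Euc 2 | ⟪ν, x⟫ < s}) + (μ (frontier R) + μ {x : Euc 2 | ⟪ν, x⟫ = s}) :=
          le_trans (measure_union_le _ _) (by gcongr; exact measure_union_le _ _)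
        _ = 0 := by rw [hz, hfr, line_null hμ hν s]; simp
    · exact nonempty_of_measure_ne_zero hnz
  have hb : (interior R ∩ {x : Euc 2 | s' < ⟪ν, x⟫}).Nonempty := by
    rcases eq_or_ne (μ (interior R ∩ {x : Euc 2 | s' < ⟪ν, x⟫})) 0 with hz | hnz
    · exfalso
      apply hRne
      have hdecomp : μ (R ∩ {x : Euc 2 | ⟪ν, x⟫ ≤ s'}) + μ (R \ {x : Euc 2 | ⟪ν, x⟫ ≤ s'}) = μ R :=
        measure_inter_add_diff R (halfplane_closed ν s').measurableSet
      have hzero : μ (R \ {x : Euc 2 | ⟪ν, x⟫ ≤ s'}) = 0 := by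
        have hsub : R \ {x : Euc 2 | ⟪ν, x⟫ ≤ s'} ⊆
            (interior R ∩ {x : Euc 2 | s' < ⟪ν, x⟫}) ∪ frontier R := by
          rintro x ⟨hxR, hxs⟩
          simp only [mem_setOf_eq, not_le] at hxs
          rcases em (x ∈ interior R) with hi | hni
          · exact Or.inl ⟨hi, hxs⟩
          · exact Or.inr (hfr' ⟨hxR, hni⟩)
        refine le_antisymm ?_ (zero_le)
        calc μ (R \ {x : Euc 2 | ⟪ν, x⟫ ≤ s'}) ≤ _ := measure_mono hsub
          _ ≤ μ (interior R ∩ {x : Euc 2 | s' < ⟪ν, x⟫}) + μ (frontier R) := measure_union_le _ _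
          _ = 0 := by rw [hz, hfr]; simp
      rw [← hdecomp, hzero, add_zero]
    · exact nonempty_of_measure_ne_zero hnz
  obtain ⟨a, haI, has⟩ := ha
  obtain ⟨b, hbI, hbs⟩ := hb
  simp only [mem_setOf_eq] at has hbs
  set α := ⟪ν, a⟫ with hα
  set β := ⟪ν, b⟫ with hβ
  have hαβ : α < β := by linarith
  set τ := ((s+s')/2 - α)/(β - α) with hτdef
  have hτ0 : 0 < τ := by apply div_pos <;> linarith
  have hτ1 : τ < 1 := by rw [div_lt_one (by linarith)]; linarith
  set z := (1-τ) • a + τ • b with hz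
  have hzI : z ∈ interior R :=
    hRconv.interior haI hbI (by linarith) (le_of_lt hτ0) (by ring)
  have hzν : ⟪ν, z⟫ = (s+s')/2 := by
    have hne : β - α ≠ 0 := by linarith
    rw [hz, inner_add_right, inner_smul_right, inner_smul_right, ← hα, ← hβ]
    have hτval : τ * (β - α) = (s+s')/2 - α := by rw [hτdef]; field_simp
    linear_combination hτval
  set V := interior R ∩ ({x : Euc 2 | s < ⟪ν, x⟫} ∩ {x : Euc 2 | ⟪ν, x⟫ < s'}) with hV
  have hVopen : IsOpen V :=
    isOpen_interior.inter ((isOpen_lt continuous_const (contInner ν)).inter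
      (isOpen_lt (contInner ν) continuous_const))
  have hVne : V.Nonempty := by
    refine ⟨z, hzI, ?_, ?_⟩ <;> simp only [mem_setOf_eq, hzν] <;> linarith
  have hVμ : μ V ≠ 0 := nice_pos hμ hVopen hVne
  have hsub : (R ∩ {x : Euc 2 | ⟪ν, x⟫ ≤ s}) ∪ V ⊆ R ∩ {x : Euc 2 | ⟪ν, x⟫ ≤ s'} := by
    rintro x (⟨hxR, hxs⟩ | ⟨hxI, hx1, hx2⟩)
    · refine ⟨hxR, ?_⟩
      simp only [mem_setOf_eq] at hxs ⊢
      linarith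
    · refine ⟨interior_subset hxI, ?_⟩
      simp only [mem_setOf_eq] at hx2 ⊢
      linarith
  have hdisj : Disjoint (R ∩ {x : Euc 2 | ⟪ν, x⟫ ≤ s}) V := by
    rw [Set.disjoint_left]
    rintro x ⟨-, hxs⟩ ⟨-, hx1, -⟩
    simp only [mem_setOf_eq] at hxs hx1
    linarith
  calc μ (R ∩ {x : Euc 2 | ⟪ν, x⟫ ≤ s})
      < μ (R ∩ {x : Euc 2 | ⟪ν, x⟫ ≤ s}) + μ V :=
        ENNReal.lt_add_right (measure_ne_top μ _) hVμ
    _ = μ ((R ∩ {x : Euc 2 | ⟪ν, x⟫ ≤ s}) ∪ V) :=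
        (measure_union hdisj hVopen.measurableSet).symm
    _ ≤ μ (R ∩ {x : Euc 2 | ⟪ν, x⟫ ≤ s'}) := measure_mono hsub

lemma exists_cut {μ : Measure (Euc 2)} (hμ : NiceMeasure 2 μ) {R : Set (Euc 2)}
    (hRconv : Convex ℝ R) (hRcl : IsClosed R) {ν : Euc 2} (hν : ν ≠ 0) {t : ℝ}
    (ht : 0 < t) (htR : ENNReal.ofReal t < μ R) :
    ∃ s : ℝ, μ (R ∩ {x : Euc 2 | ⟪ν, x⟫ ≤ s}) = ENNReal.ofReal t := by
  haveI : IsProbabilityMeasure μ := hμ.1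
  have hRmeas := hRcl.measurableSet
  set A : ℝ → ℝ := fun s => (μ (R ∩ {x : Euc 2 | ⟪ν, x⟫ ≤ s})).toReal with hA
  have hAcont : Continuous A := by
    rw [continuous_iff_continuousAt]
    intro s
    exact (measA_cont hμ hRmeas (p := (ν, s)) hν).comp
      ((continuous_const.prodMk continuous_id).continuousAt)
  have hlow : ∃ n : ℕ, μ (R ∩ {x : Euc 2 | ⟪ν, x⟫ ≤ -(n:ℝ)}) < ENNReal.ofReal t := by
    have hanti : Antitone (fun n : ℕ => R ∩ {x : Euc 2 | ⟪ν, x⟫ ≤ -(n:ℝ)}) := by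
      intro m n hmn
      apply inter_subset_inter_right
      intro x hx
      simp only [mem_setOf_eq] at *
      have : -(n:ℝ) ≤ -(m:ℝ) := neg_le_neg (Nat.cast_le.mpr hmn)
      linarith
    have hint : (⋂ n : ℕ, R ∩ {x : Euc 2 | ⟪ν, x⟫ ≤ -(n:ℝ)}) = ∅ := by
      ext x
      simp only [mem_iInter, mem_empty_iff_false, iff_false, not_forall]
      obtain ⟨n, hn⟩ := exists_nat_gt (-⟪ν, x⟫)
      refine ⟨n, fun hc => ?_⟩
      have := hc.2
      simp only [mem_setOf_eq] at this
      linarith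
    have htd := tendsto_measure_iInter_atTop
      (fun n => (hRmeas.inter (halfplane_closed ν _).measurableSet).nullMeasurableSet)
      hanti ⟨0, measure_ne_top μ _⟩
    rw [hint] at htd
    simp only [measure_empty] at htd
    exact (htd.eventually_lt_const (ENNReal.ofReal_pos.mpr ht)).exists
  have hup : ∃ n : ℕ, ENNReal.ofReal t < μ (R ∩ {x : Euc 2 | ⟪ν, x⟫ ≤ (n:ℝ)}) := by
    have hmono : Monotone (fun n : ℕ => R ∩ {x : Euc 2 | ⟪ν, x⟫ ≤ (n:ℝ)}) := by
      intro m n hmn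
      apply inter_subset_inter_right
      intro x hx
      simp only [mem_setOf_eq] at *
      have : (m:ℝ) ≤ (n:ℝ) := Nat.cast_le.mpr hmn
      linarith
    have hun : (⋃ n : ℕ, R ∩ {x : Euc 2 | ⟪ν, x⟫ ≤ (n:ℝ)}) = R := by
      apply Subset.antisymm
      · exact iUnion_subset fun n => inter_subset_left
      · intro x hx
        obtain ⟨n, hn⟩ := exists_nat_gt ⟪ν, x⟫
        exact mem_iUnion.mpr ⟨n, hx, le_of_lt hn⟩
    have htd := tendsto_measure_iUnion_atTop (μ := μ) hmono
    rw [hun] at htd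
    exact (htd.eventually_const_lt htR).exists
  obtain ⟨n₁, h₁⟩ := hlow
  obtain ⟨n₂, h₂⟩ := hup
  have ha1 : A (-(n₁:ℝ)) < t := ENNReal.toReal_lt_of_lt_ofReal h₁
  have ha2 : t < A (n₂:ℝ) :=
    (ENNReal.ofReal_lt_iff_lt_toReal (le_of_lt ht) (measure_ne_top μ _)).mp h₂
  have hab : -(n₁:ℝ) ≤ (n₂:ℝ) := le_trans (by simp) (Nat.cast_nonneg n₂)
  obtain ⟨s, -, hs⟩ := intermediate_value_Icc hab hAcont.continuousOn
    (mem_Icc.mpr ⟨le_of_lt ha1, le_of_lt ha2⟩)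
  refine ⟨s, ?_⟩
  rw [← ENNReal.ofReal_toReal (measure_ne_top μ (R ∩ {x : Euc 2 | ⟪ν, x⟫ ≤ s}))]
  exact congrArg ENNReal.ofReal hs

def nuv (θ : ℝ) : Euc 2 :=
  Real.sin θ • (EuclideanSpace.single 0 (1:ℝ)) + (-Real.cos θ) • (EuclideanSpace.single 1 (1:ℝ))

lemma inner_nuv (θ : ℝ) (x : Euc 2) : ⟪nuv θ, x⟫ = Real.sin θ * x 0 - Real.cos θ * x 1 := by
  simp only [nuv, inner_add_left, real_inner_smul_left, EuclideanSpace.inner_single_left,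
    starRingEnd_apply, star_one, one_mul]
  ring

lemma inner_e1 (x : Euc 2) : ⟪EuclideanSpace.single 1 (1:ℝ), x⟫ = x 1 := by
  simp [EuclideanSpace.inner_single_left]

lemma e1_ne : (EuclideanSpace.single 1 (1:ℝ) : Euc 2) ≠ 0 := by
  intro h
  have := congrArg (fun v : Euc 2 => v 1) h
  simp [EuclideanSpace.single_apply] at this

lemma nuv_norm (θ : ℝ) : ‖nuv θ‖ = 1 := by
  have h : ⟪nuv θ, nuv θ⟫ = 1 := by
    rw [inner_nuv]
    simp only [nuv, PiLp.add_apply, PiLp.smul_apply, EuclideanSpace.single_apply,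
      smul_eq_mul]
    norm_num
    nlinarith [Real.sin_sq_add_cos_sq θ]
  have h2 := real_inner_self_eq_norm_sq (nuv θ)
  nlinarith [norm_nonneg (nuv θ)]

lemma nuv_ne (θ : ℝ) : nuv θ ≠ 0 := by
  intro h
  have := nuv_norm θ
  rw [h, norm_zero] at this
  norm_num at this

lemma nuv_cont : Continuous nuv :=
  (Real.continuous_sin.smul continuous_const).add
    ((Real.continuous_cos.neg).smul continuous_const)

set_option maxHeartbeats 1000000 in
lemma step_cut {μ : Measure (Euc 2)} (hμ : NiceMeasure 2 μ) (c₀ : ℝ) {RU RL : Set (Euc 2)}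
    (hUconv : Convex ℝ RU) (hUcl : IsClosed RU) (hUsub : RU ⊆ {x : Euc 2 | c₀ ≤ x 1})
    (hLcl : IsClosed RL) (hLsub : RL ⊆ {x : Euc 2 | x 1 ≤ c₀})
    {t : ℝ} (ht : 0 < t) (hU : ENNReal.ofReal t < μ RU) (hL : ENNReal.ofReal t < μ RL) :
    ∃ ν : Euc 2, ∃ s : ℝ, ‖ν‖ = 1 ∧
      μ (RU ∩ {x : Euc 2 | ⟪ν, x⟫ ≤ s}) = ENNReal.ofReal t ∧
      μ (RL ∩ {x : Euc 2 | ⟪ν, x⟫ ≤ s}) = ENNReal.ofReal t := by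
  haveI : IsProbabilityMeasure μ := hμ.1
  have hex : ∀ θ : ℝ, ∃ s : ℝ, μ (RU ∩ {x : Euc 2 | ⟪nuv θ, x⟫ ≤ s}) = ENNReal.ofReal t :=
    fun θ => exists_cut hμ hUconv hUcl (nuv_ne θ) ht hU
  choose sfun hsfun using hex
  have hAlt : ∀ θ (s' : ℝ), sfun θ < s' →
      ENNReal.ofReal t < μ (RU ∩ {x : Euc 2 | ⟪nuv θ, x⟫ ≤ s'}) := by
    intro θ s' h
    rcases eq_or_ne (μ (RU ∩ {x : Euc 2 | ⟪nuv θ, x⟫ ≤ s'})) (μ RU) with he | hne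
    · rw [he]; exact hU
    · rw [← hsfun θ]
      refine cut_strict hμ hUconv hUcl (nuv_ne θ) h ?_ hne
      rw [hsfun θ]
      exact (ENNReal.ofReal_pos.mpr ht).ne'
  have hAgt : ∀ θ (s' : ℝ), s' < sfun θ →
      μ (RU ∩ {x : Euc 2 | ⟪nuv θ, x⟫ ≤ s'}) < ENNReal.ofReal t := by
    intro θ s' h
    rcases eq_or_ne (μ (RU ∩ {x : Euc 2 | ⟪nuv θ, x⟫ ≤ s'})) 0 with he | hne
    · rw [he]; exact ENNReal.ofReal_pos.mpr ht
    · rw [← hsfun θ]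
      refine cut_strict hμ hUconv hUcl (nuv_ne θ) h hne ?_
      rw [hsfun θ]
      exact hU.ne
  -- continuity of sfun
  have hBcont : ∀ (s : ℝ), Continuous fun θ => (μ (RU ∩ {x : Euc 2 | ⟪nuv θ, x⟫ ≤ s})).toReal := by
    intro s
    have hpair : Continuous fun θ : ℝ => ((nuv θ, s) : Euc 2 × ℝ) :=
      nuv_cont.prodMk continuous_const
    rw [continuous_iff_continuousAt]
    intro θ
    exact ContinuousAt.comp (f := fun θ : ℝ => ((nuv θ, s) : Euc 2 × ℝ)) (x := θ)
      (measA_cont hμ hUcl.measurableSet (p := (nuv θ, s)) (nuv_ne θ)) hpair.continuousAt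
  have hscont : Continuous sfun := by
    rw [Metric.continuous_iff]
    intro θ ε hε
    have h1 : ENNReal.ofReal t < μ (RU ∩ {x : Euc 2 | ⟪nuv θ, x⟫ ≤ sfun θ + ε/2}) :=
      hAlt θ _ (by linarith)
    have h2 : μ (RU ∩ {x : Euc 2 | ⟪nuv θ, x⟫ ≤ sfun θ - ε/2}) < ENNReal.ofReal t :=
      hAgt θ _ (by linarith)
    have h1r : t < (μ (RU ∩ {x : Euc 2 | ⟪nuv θ, x⟫ ≤ sfun θ + ε/2})).toReal :=
      (ENNReal.ofReal_lt_iff_lt_toReal (le_of_lt ht) (measure_ne_top μ _)).mp h1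
    have h2r : (μ (RU ∩ {x : Euc 2 | ⟪nuv θ, x⟫ ≤ sfun θ - ε/2})).toReal < t :=
      ENNReal.toReal_lt_of_lt_ofReal h2
    have hev1 : ∀ᶠ θ' in 𝓝 θ,
        t < (μ (RU ∩ {x : Euc 2 | ⟪nuv θ', x⟫ ≤ sfun θ + ε/2})).toReal :=
      ((hBcont (sfun θ + ε/2)).continuousAt).eventually_const_lt h1r
    have hev2 : ∀ᶠ θ' in 𝓝 θ,
        (μ (RU ∩ {x : Euc 2 | ⟪nuv θ', x⟫ ≤ sfun θ - ε/2})).toReal < t :=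
      ((hBcont (sfun θ - ε/2)).continuousAt).eventually_lt_const h2r
    obtain ⟨δ, hδ, hδprop⟩ := Metric.eventually_nhds_iff.mp (hev1.and hev2)
    refine ⟨δ, hδ, fun θ' hθ' => ?_⟩
    obtain ⟨ha, hb⟩ := hδprop hθ'
    -- sfun θ' < sfun θ + ε/2
    have hup : sfun θ' < sfun θ + ε/2 := by
      by_contra hcon
      push_neg at hcon
      rcases eq_or_lt_of_le hcon with he | hl
      · have hts := hsfun θ'
        rw [← he] at hts
        rw [hts, ENNReal.toReal_ofReal (le_of_lt ht)] at ha
        exact lt_irrefl t ha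
      · have := hAgt θ' _ hl
        have h3 : (μ (RU ∩ {x : Euc 2 | ⟪nuv θ', x⟫ ≤ sfun θ + ε/2})).toReal < t :=
          ENNReal.toReal_lt_of_lt_ofReal this
        linarith
    have hdn : sfun θ - ε/2 < sfun θ' := by
      by_contra hcon
      push_neg at hcon
      rcases eq_or_lt_of_le hcon with he | hl
      · have hts := hsfun θ'
        rw [he] at hts
        rw [hts, ENNReal.toReal_ofReal (le_of_lt ht)] at hb
        exact lt_irrefl t hb
      · have := hAlt θ' _ hl
        have h3 : t < (μ (RU ∩ {x : Euc 2 | ⟪nuv θ', x⟫ ≤ sfun θ - ε/2})).toReal :=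
          (ENNReal.ofReal_lt_iff_lt_toReal (le_of_lt ht) (measure_ne_top μ _)).mp this
        linarith
    rw [Real.dist_eq, abs_lt]
    constructor <;> linarith
  -- the lower-region function
  set ψ : ℝ → ℝ := fun θ => (μ (RL ∩ {x : Euc 2 | ⟪nuv θ, x⟫ ≤ sfun θ})).toReal with hψdef
  have hψcont : Continuous ψ := by
    have hpair : Continuous fun θ : ℝ => ((nuv θ, sfun θ) : Euc 2 × ℝ) :=
      nuv_cont.prodMk hscont
    rw [continuous_iff_continuousAt]
    intro θ
    exact ContinuousAt.comp (f := fun θ : ℝ => ((nuv θ, sfun θ) : Euc 2 × ℝ)) (x := θ)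
      (measA_cont hμ hLcl.measurableSet (p := (nuv θ, sfun θ)) (nuv_ne θ)) hpair.continuousAt
  -- endpoint θ = 0
  have hnuv0 : ∀ x : Euc 2, ⟪nuv 0, x⟫ = -(x 1) := by
    intro x; rw [inner_nuv]; simp
  have hψ0 : ψ 0 = 0 := by
    have hc : c₀ < -(sfun 0) := by
      by_contra hcon
      push_neg at hcon
      have hsub2 : RU ⊆ {x : Euc 2 | ⟪nuv 0, x⟫ ≤ sfun 0} := by
        intro x hx
        have hx1 : c₀ ≤ x 1 := hUsub hx
        simp only [mem_setOf_eq, hnuv0 x]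
        linarith
      have heq2 : RU ∩ {x : Euc 2 | ⟪nuv 0, x⟫ ≤ sfun 0} = RU := inter_eq_left.mpr hsub2
      have h0 := hsfun 0
      rw [heq2] at h0
      exact hU.ne' h0
    have hempty : RL ∩ {x : Euc 2 | ⟪nuv 0, x⟫ ≤ sfun 0} = ∅ := by
      ext x
      simp only [mem_inter_iff, mem_setOf_eq, mem_empty_iff_false, iff_false, not_and]
      intro hx
      have hx1 : x 1 ≤ c₀ := hLsub hx
      rw [hnuv0 x]
      intro hcon
      linarith
    rw [hψdef]
    simp only [hempty, measure_empty, ENNReal.toReal_zero]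
  -- endpoint θ = π
  have hnuvπ : ∀ x : Euc 2, ⟪nuv Real.pi, x⟫ = x 1 := by
    intro x; rw [inner_nuv]; simp
  have hψπ : ψ Real.pi = (μ RL).toReal := by
    have hc : c₀ < sfun Real.pi := by
      by_contra hcon
      push_neg at hcon
      have hsub2 : RU ∩ {x : Euc 2 | ⟪nuv Real.pi, x⟫ ≤ sfun Real.pi} ⊆
          {x : Euc 2 | ⟪EuclideanSpace.single 1 (1:ℝ), x⟫ = c₀} := by
        rintro x ⟨hxU, hxs⟩
        have hx1 : c₀ ≤ x 1 := hUsub hxU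
        simp only [mem_setOf_eq] at hxs
        rw [hnuvπ x] at hxs
        rw [mem_setOf_eq, inner_e1]
        linarith
      have h0 : μ (RU ∩ {x : Euc 2 | ⟪nuv Real.pi, x⟫ ≤ sfun Real.pi}) = 0 :=
        le_antisymm (le_trans (measure_mono hsub2) (le_of_eq (line_null hμ e1_ne c₀)))
          (zero_le)
      rw [hsfun Real.pi] at h0
      exact (ENNReal.ofReal_pos.mpr ht).ne' h0
    have hsub2 : RL ⊆ {x : Euc 2 | ⟪nuv Real.pi, x⟫ ≤ sfun Real.pi} := by
      intro x hx
      have hx1 : x 1 ≤ c₀ := hLsub hx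
      simp only [mem_setOf_eq, hnuvπ x]
      linarith
    rw [hψdef]
    simp only [inter_eq_left.mpr hsub2]
  have hmem : t ∈ Icc (ψ 0) (ψ Real.pi) := by
    rw [hψ0, hψπ]
    constructor
    · exact le_of_lt ht
    · exact le_of_lt ((ENNReal.ofReal_lt_iff_lt_toReal (le_of_lt ht) (measure_ne_top μ _)).mp hL)
  obtain ⟨θ, -, hθ⟩ := intermediate_value_Icc Real.pi_nonneg hψcont.continuousOn hmem
  refine ⟨nuv θ, sfun θ, nuv_norm θ, hsfun θ, ?_⟩
  rw [← ENNReal.ofReal_toReal (measure_ne_top μ (RL ∩ {x : Euc 2 | ⟪nuv θ, x⟫ ≤ sfun θ}))]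
  exact congrArg ENNReal.ofReal hθ
def cutG (w : ℕ → (Euc 2) × ℝ) (j : ℕ) (x : Euc 2) : ℝ := ⟪(w j).1, x⟫ - (w j).2

def regS (S0 : Set (Euc 2)) (w : ℕ → (Euc 2) × ℝ) (l : ℕ) : Set (Euc 2) :=
  {x ∈ S0 | ∀ j, j < l → 0 ≤ cutG w j x}

lemma cont_cutG (w : ℕ → (Euc 2) × ℝ) (j : ℕ) : Continuous (cutG w j) :=
  (contInner _).sub continuous_const

lemma cont_coord : Continuous fun x : Euc 2 => x 1 := by
  have h := contInner (EuclideanSpace.single 1 (1:ℝ))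
  simpa only [inner_e1] using h

lemma regS_eq (S0 : Set (Euc 2)) (w : ℕ → (Euc 2) × ℝ) (l : ℕ) :
    regS S0 w l = S0 ∩ ⋂ (j : ℕ) (_ : j < l), {x : Euc 2 | 0 ≤ cutG w j x} := by
  ext x
  simp [regS, mem_iInter]

lemma regS_closed {S0 : Set (Euc 2)} (hS0 : IsClosed S0) (w : ℕ → (Euc 2) × ℝ) (l : ℕ) :
    IsClosed (regS S0 w l) := by
  rw [regS_eq]
  exact hS0.inter (isClosed_iInter fun j => isClosed_iInter fun _ =>
    isClosed_le continuous_const (cont_cutG w j))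

lemma convex_halfGe (w : ℕ → (Euc 2) × ℝ) (j : ℕ) : Convex ℝ {x : Euc 2 | 0 ≤ cutG w j x} := by
  intro x hx y hy a b ha hb hab
  simp only [mem_setOf_eq, cutG, inner_add_right, inner_smul_right] at *
  have habs : a * (w j).2 + b * (w j).2 = (w j).2 := by rw [← add_mul, hab, one_mul]
  nlinarith [mul_nonneg ha hx, mul_nonneg hb hy, habs]

lemma regS_convex {S0 : Set (Euc 2)} (hS0 : Convex ℝ S0) (w : ℕ → (Euc 2) × ℝ) (l : ℕ) :
    Convex ℝ (regS S0 w l) := by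
  rw [regS_eq]
  exact hS0.inter (convex_iInter fun j => convex_iInter fun _ => convex_halfGe w j)

lemma regS_congr {S0 : Set (Euc 2)} {w w' : ℕ → (Euc 2) × ℝ} {l : ℕ}
    (h : ∀ j, j < l → w j = w' j) : regS S0 w l = regS S0 w' l := by
  ext x
  simp only [regS, mem_setOf_eq, cutG]
  constructor
  · rintro ⟨h1, h2⟩
    exact ⟨h1, fun j hj => by rw [← h j hj]; exact h2 j hj⟩
  · rintro ⟨h1, h2⟩
    exact ⟨h1, fun j hj => by rw [h j hj]; exact h2 j hj⟩

lemma regS_succ (S0 : Set (Euc 2)) (w : ℕ → (Euc 2) × ℝ) (l : ℕ) :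
    regS S0 w (l+1) = regS S0 w l ∩ {x : Euc 2 | 0 ≤ cutG w l x} := by
  ext x
  simp only [regS, mem_setOf_eq, mem_inter_iff, Nat.lt_succ_iff_lt_or_eq]
  constructor
  · rintro ⟨h1, h2⟩
    exact ⟨⟨h1, fun j hj => h2 j (Or.inl hj)⟩, h2 l (Or.inr rfl)⟩
  · rintro ⟨⟨h1, h2⟩, h3⟩
    refine ⟨h1, fun j hj => ?_⟩
    rcases hj with hj | rfl
    · exact h2 j hj
    · exact h3

/-- Measure of the remaining region after `l` cuts. -/
lemma regS_measure {μ : Measure (Euc 2)} (hμ : NiceMeasure 2 μ) {S0 : Set (Euc 2)}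
    (hS0m : MeasurableSet S0) {w : ℕ → (Euc 2) × ℝ} {T : ℝ} (hT : 0 ≤ T) {i : ℕ}
    (hS0 : μ S0 = ENNReal.ofReal (1/2))
    (hnorm : ∀ l, l < i → ‖(w l).1‖ = 1)
    (hcut : ∀ l, l < i → μ (regS S0 w l ∩ {x : Euc 2 | cutG w l x ≤ 0}) = ENNReal.ofReal T)
    (hsum : ∀ l, l ≤ i → (l:ℝ) * T ≤ 1/2) :
    ∀ l, l ≤ i → μ (regS S0 w l) = ENNReal.ofReal (1/2 - l * T) := by
  intro l
  induction l with
  | zero =>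
    intro _
    have h0 : regS S0 w 0 = S0 := by
      ext x; simp [regS]
    rw [h0, hS0]
    norm_num
  | succ l ih =>
    intro hl
    have hli : l < i := lt_of_lt_of_le (Nat.lt_succ_self l) hl
    have hIH := ih (le_of_lt hli)
    set A := regS S0 w l with hA
    set B := A ∩ {x : Euc 2 | cutG w l x ≤ 0} with hB
    set C := A ∩ {x : Euc 2 | 0 ≤ cutG w l x} with hC
    have hAmeas : MeasurableSet A := by
      rw [hA, regS_eq]
      exact hS0m.inter (MeasurableSet.iInter fun j => MeasurableSet.iInter fun _ =>
        (isClosed_le continuous_const (cont_cutG w j)).measurableSet)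
    have hBC : B ∪ C = A := by
      ext x
      simp only [hB, hC, mem_union, mem_inter_iff, mem_setOf_eq]
      constructor
      · rintro (⟨h1, -⟩ | ⟨h1, -⟩) <;> exact h1
      · intro h1
        rcases le_total (cutG w l x) 0 with h2 | h2
        · exact Or.inl ⟨h1, h2⟩
        · exact Or.inr ⟨h1, h2⟩
    have hBCint : μ (B ∩ C) = 0 := by
      have hsub : B ∩ C ⊆ {x : Euc 2 | ⟪(w l).1, x⟫ = (w l).2} := by
        rintro x ⟨⟨-, h1⟩, -, h2⟩
        simp only [mem_setOf_eq, cutG] at h1 h2 ⊢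
        linarith
      have hν : (w l).1 ≠ 0 := by
        intro h
        have := hnorm l hli
        rw [h, norm_zero] at this
        norm_num at this
      exact le_antisymm (le_trans (measure_mono hsub) (le_of_eq (line_null hμ hν _)))
        (zero_le)
    have hkey : μ A = μ B + μ C := by
      have hCmeas : MeasurableSet C := by
        rw [hC]
        exact hAmeas.inter (isClosed_le continuous_const (cont_cutG w l)).measurableSet
      have h := measure_union_add_inter (μ := μ) (t := C) B hCmeas
      rw [hBC, hBCint, add_zero] at h
      exact h
    have hBval : μ B = ENNReal.ofReal T := hcut l hli
    have hnn : 0 ≤ 1/2 - ((l:ℝ)+1)*T := by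
      have h := hsum (l+1) hl
      push_cast at h
      linarith
    have harith : (1:ℝ)/2 - (l:ℝ)*T = T + (1/2 - ((l:ℝ)+1)*T) := by ring
    have hsplit : ENNReal.ofReal (1/2 - (l:ℝ)*T)
        = ENNReal.ofReal T + ENNReal.ofReal (1/2 - ((l:ℝ)+1)*T) := by
      rw [← ENNReal.ofReal_add hT hnn, ← harith]
    have hCval : μ C = ENNReal.ofReal (1/2 - ((l:ℝ)+1)*T) := by
      have h2 : ENNReal.ofReal T + μ C = ENNReal.ofReal T + ENNReal.ofReal (1/2 - ((l:ℝ)+1)*T) := by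
        rw [← hBval, ← hkey, hIH, hsplit, hBval]
      exact (ENNReal.add_right_inj ENNReal.ofReal_ne_top).mp h2
    have hfin : regS S0 w (l+1) = C := by
      rw [hC, hA, ← regS_succ]
    rw [hfin, hCval]
    congr 1
    push_cast
    ring
lemma upper_closed (c₀ : ℝ) : IsClosed {x : Euc 2 | c₀ ≤ x 1} :=
  isClosed_le continuous_const cont_coord

lemma lower_closed (c₀ : ℝ) : IsClosed {x : Euc 2 | x 1 ≤ c₀} :=
  isClosed_le cont_coord continuous_const

lemma upper_convex (c₀ : ℝ) : Convex ℝ {x : Euc 2 | c₀ ≤ x 1} := by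
  have h := convex_halfGe (fun _ => (EuclideanSpace.single 1 (1:ℝ), c₀)) 0
  have he : {x : Euc 2 | 0 ≤ cutG (fun _ => (EuclideanSpace.single 1 (1:ℝ), c₀)) 0 x}
      = {x : Euc 2 | c₀ ≤ x 1} := by
    ext x; simp [cutG, inner_e1, sub_nonneg]
  rwa [he] at h

lemma lower_convex (c₀ : ℝ) : Convex ℝ {x : Euc 2 | x 1 ≤ c₀} := by
  have h := convex_halfGe (fun _ => (-EuclideanSpace.single 1 (1:ℝ), -c₀)) 0
  have he : {x : Euc 2 | 0 ≤ cutG (fun _ => (-EuclideanSpace.single 1 (1:ℝ), -c₀)) 0 x}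
      = {x : Euc 2 | x 1 ≤ c₀} := by
    ext x
    simp only [cutG, mem_setOf_eq, inner_neg_left, inner_e1]
    constructor <;> intro h <;> linarith
  rwa [he] at h

lemma halving_exists {μ : Measure (Euc 2)} (hμ : NiceMeasure 2 μ) :
    ∃ c₀ : ℝ, μ {x : Euc 2 | x 1 ≤ c₀} = ENNReal.ofReal (1/2) ∧
      μ {x : Euc 2 | c₀ ≤ x 1} = ENNReal.ofReal (1/2) := by
  haveI : IsProbabilityMeasure μ := hμ.1
  have hlt : ENNReal.ofReal (1/2) < μ univ := by
    rw [measure_univ]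
    exact ENNReal.ofReal_lt_one.mpr (by norm_num)
  obtain ⟨s, hs⟩ := exists_cut hμ convex_univ isClosed_univ e1_ne
    (by norm_num : (0:ℝ) < 1/2) hlt
  rw [univ_inter] at hs
  have hset : {x : Euc 2 | ⟪EuclideanSpace.single 1 (1:ℝ), x⟫ ≤ s} = {x : Euc 2 | x 1 ≤ s} := by
    ext x; simp [inner_e1]
  rw [hset] at hs
  refine ⟨s, hs, ?_⟩
  have hint : μ ({x : Euc 2 | x 1 ≤ s} ∩ {x : Euc 2 | s ≤ x 1}) = 0 := by
    have hsub : {x : Euc 2 | x 1 ≤ s} ∩ {x : Euc 2 | s ≤ x 1}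
        ⊆ {x : Euc 2 | ⟪EuclideanSpace.single 1 (1:ℝ), x⟫ = s} := by
      rintro x ⟨h1, h2⟩
      simp only [mem_setOf_eq] at h1 h2 ⊢
      rw [inner_e1]
      linarith
    exact le_antisymm (le_trans (measure_mono hsub) (le_of_eq (line_null hμ e1_ne s)))
      (zero_le)
  have huni : {x : Euc 2 | x 1 ≤ s} ∪ {x : Euc 2 | s ≤ x 1} = univ := by
    ext x
    simp only [mem_union, mem_setOf_eq, mem_univ, iff_true]
    exact le_total (x 1) s
  have h := measure_union_add_inter (μ := μ) (t := {x : Euc 2 | s ≤ x 1})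
    {x : Euc 2 | x 1 ≤ s} (upper_closed s).measurableSet
  rw [huni, hint, measure_univ, add_zero, hs] at h
  have hone : (1:ℝ≥0∞) = ENNReal.ofReal (1/2) + ENNReal.ofReal (1/2) := by
    rw [← ENNReal.ofReal_add (by norm_num) (by norm_num)]
    norm_num
  rw [hone] at h
  exact ((ENNReal.add_right_inj ENNReal.ofReal_ne_top).mp h).symm

lemma cuts_exist {μ : Measure (Euc 2)} (hμ : NiceMeasure 2 μ) (k : ℕ) {c₀ : ℝ}
    (hlo : μ {x : Euc 2 | x 1 ≤ c₀} = ENNReal.ofReal (1/2))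
    (hup : μ {x : Euc 2 | c₀ ≤ x 1} = ENNReal.ofReal (1/2)) :
    ∀ i, i ≤ k → ∃ w : ℕ → (Euc 2) × ℝ,
      (∀ l, l < i → ‖(w l).1‖ = 1) ∧
      (∀ l, l < i → μ (regS {x : Euc 2 | c₀ ≤ x 1} w l ∩ {x : Euc 2 | cutG w l x ≤ 0})
         = ENNReal.ofReal (1/(2*(k:ℝ)+2))) ∧
      (∀ l, l < i → μ (regS {x : Euc 2 | x 1 ≤ c₀} w l ∩ {x : Euc 2 | cutG w l x ≤ 0})
         = ENNReal.ofReal (1/(2*(k:ℝ)+2))) := by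
  have hk2 : (0:ℝ) < 2*(k:ℝ)+2 := by positivity
  set T : ℝ := 1/(2*(k:ℝ)+2) with hTdef
  have hTpos : 0 < T := by rw [hTdef]; positivity
  have hTval : ((k:ℝ)+1) * T = 1/2 := by
    rw [hTdef]
    field_simp
  have hsum : ∀ l : ℕ, l ≤ k → (l:ℝ) * T ≤ 1/2 := by
    intro l hl
    have hcast : (l:ℝ) ≤ (k:ℝ) := Nat.cast_le.mpr hl
    nlinarith [hTpos]
  intro i
  induction i with
  | zero =>
    intro _
    exact ⟨fun _ => (EuclideanSpace.single 1 (1:ℝ), 0),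
      fun l hl => absurd hl l.not_lt_zero,
      fun l hl => absurd hl l.not_lt_zero,
      fun l hl => absurd hl l.not_lt_zero⟩
  | succ i ih =>
    intro hi1
    have hik : i < k := Nat.lt_of_succ_le hi1
    obtain ⟨w, hw1, hw2, hw3⟩ := ih (le_of_lt hik)
    have hsum' : ∀ l : ℕ, l ≤ i → (l:ℝ) * T ≤ 1/2 :=
      fun l hl => hsum l (le_trans hl (le_of_lt hik))
    have hmeasU := regS_measure hμ (upper_closed c₀).measurableSet hTpos.le hup hw1 hw2 hsum'
    have hmeasL := regS_measure hμ (lower_closed c₀).measurableSet hTpos.le hlo hw1 hw3 hsum'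
    have hUval : μ (regS {x : Euc 2 | c₀ ≤ x 1} w i) = ENNReal.ofReal (1/2 - (i:ℝ)*T) :=
      hmeasU i le_rfl
    have hLval : μ (regS {x : Euc 2 | x 1 ≤ c₀} w i) = ENNReal.ofReal (1/2 - (i:ℝ)*T) :=
      hmeasL i le_rfl
    have harith : T < 1/2 - (i:ℝ)*T := by
      have hcast : (i:ℝ) + 1 < (k:ℝ) + 1 := by
        have : (i:ℝ) < (k:ℝ) := Nat.cast_lt.mpr hik
        linarith
      nlinarith [hTpos]
    have hUgt : ENNReal.ofReal T < μ (regS {x : Euc 2 | c₀ ≤ x 1} w i) := by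
      rw [hUval]
      exact (ENNReal.ofReal_lt_ofReal_iff (by linarith)).mpr harith
    have hLgt : ENNReal.ofReal T < μ (regS {x : Euc 2 | x 1 ≤ c₀} w i) := by
      rw [hLval]
      exact (ENNReal.ofReal_lt_ofReal_iff (by linarith)).mpr harith
    obtain ⟨ν, s, hνnorm, hcutU, hcutL⟩ := step_cut hμ c₀
      (regS_convex (upper_convex c₀) w i) (regS_closed (upper_closed c₀) w i)
      (fun x hx => hx.1) (regS_closed (lower_closed c₀) w i) (fun x hx => hx.1)
      hTpos hUgt hLgt
    set w' := Function.update w i (ν, s) with hw'def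
    have hagree : ∀ j, j < i → w j = w' j := by
      intro j hj
      rw [hw'def, Function.update_of_ne (Nat.ne_of_lt hj)]
    have hagree' : ∀ l, l < i + 1 → ∀ j, j < l → w j = w' j :=
      fun l hl j hj => hagree j (by omega)
    have hcut_eq : ∀ l, l < i → {x : Euc 2 | cutG w' l x ≤ 0} = {x : Euc 2 | cutG w l x ≤ 0} := by
      intro l hl
      have : w' l = w l := by rw [hw'def, Function.update_of_ne (Nat.ne_of_lt hl)]
      ext x
      simp [cutG, this]
    have hcut_i : {x : Euc 2 | cutG w' i x ≤ 0} = {x : Euc 2 | ⟪ν, x⟫ ≤ s} := by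
      ext x
      simp only [mem_setOf_eq, cutG, hw'def, Function.update_self]
      constructor <;> intro h <;> linarith
    refine ⟨w', ?_, ?_, ?_⟩
    · intro l hl
      rcases Nat.lt_succ_iff_lt_or_eq.mp hl with h | rfl
      · rw [hw'def, Function.update_of_ne (Nat.ne_of_lt h)]
        exact hw1 l h
      · rw [hw'def, Function.update_self]
        exact hνnorm
    · intro l hl
      rw [← regS_congr (hagree' l hl)]
      rcases Nat.lt_succ_iff_lt_or_eq.mp hl with h | rfl
      · rw [hcut_eq l h]
        exact hw2 l h
      · rw [hcut_i]
        exact hcutU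
    · intro l hl
      rw [← regS_congr (hagree' l hl)]
      rcases Nat.lt_succ_iff_lt_or_eq.mp hl with h | rfl
      · rw [hcut_eq l h]
        exact hw3 l h
      · rw [hcut_i]
        exact hcutL
lemma euc_ext {x y : Euc 2} (h0 : x 0 = y 0) (h1 : x 1 = y 1) : x = y := by
  ext i
  fin_cases i
  · exact h0
  · exact h1

lemma euc_coord_cases {x : Euc 2} (hx : x ≠ 0) : x 0 ≠ 0 ∨ x 1 ≠ 0 := by
  by_contra hcon
  push_neg at hcon
  exact hx (euc_ext (by simp [hcon.1]) (by simp [hcon.2]))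

lemma interior_strict {S : Set (Euc 2)} {x : Euc 2} (hx : x ∈ interior S) {ν : Euc 2}
    (hν : ν ≠ 0) {r : ℝ} (h : ∀ y ∈ S, r ≤ ⟪ν, y⟫) : r < ⟪ν, x⟫ := by
  obtain ⟨ε, hε, hball⟩ := Metric.mem_nhds_iff.mp (mem_interior_iff_mem_nhds.mp hx)
  have hvpos : 0 < ‖ν‖ := norm_pos_iff.mpr hν
  have hy : x - (ε/(2*‖ν‖)) • ν ∈ S := by
    apply hball
    simp only [mem_ball, dist_self_sub_left, norm_smul, Real.norm_eq_abs]
    rw [abs_of_pos (by positivity), div_mul_eq_mul_div, mul_comm, div_lt_iff₀ (by positivity)]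
    nlinarith
  have hle := h _ hy
  rw [inner_sub_right, inner_smul_right, real_inner_self_eq_norm_sq] at hle
  have : 0 < ε/(2*‖ν‖) * ‖ν‖^2 := by positivity
  linarith

lemma perp_parallel {v a b : Euc 2} (hv : v ≠ 0) (ha : ⟪v, a⟫ = 0) (hb : ⟪v, b⟫ = 0)
    (hb0 : b ≠ 0) : ∃ t : ℝ, a = t • b := by
  rw [inner2] at ha hb
  have hdet : a 0 * b 1 - a 1 * b 0 = 0 := by
    rcases euc_coord_cases hv with h | h
    · have hkey : v 0 * (a 0 * b 1 - a 1 * b 0) = 0 := by linear_combination b 1 * ha - a 1 * hb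
      rcases mul_eq_zero.mp hkey with h' | h'
      · exact absurd h' h
      · exact h'
    · have hkey : v 1 * (a 0 * b 1 - a 1 * b 0) = 0 := by linear_combination a 0 * hb - b 0 * ha
      rcases mul_eq_zero.mp hkey with h' | h'
      · exact absurd h' h
      · exact h'
  rcases euc_coord_cases hb0 with h | h
  · refine ⟨a 0 / b 0, euc_ext ?_ ?_⟩
    · simp only [PiLp.smul_apply, smul_eq_mul]
      field_simp
    · simp only [PiLp.smul_apply, smul_eq_mul]
      field_simp
      linear_combination -hdet
  · refine ⟨a 1 / b 1, euc_ext ?_ ?_⟩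
    · simp only [PiLp.smul_apply, smul_eq_mul]
      field_simp
      linear_combination hdet
    · simp only [PiLp.smul_apply, smul_eq_mul]
      field_simp

def partP (c₀ σ : ℝ) (w : ℕ → (Euc 2) × ℝ) (k i : ℕ) : Set (Euc 2) :=
  {x : Euc 2 | 0 ≤ σ * (x 1 - c₀) ∧ (∀ j, j < i → 0 ≤ cutG w j x) ∧ (i < k → cutG w i x ≤ 0)}

def partO (c₀ σ : ℝ) (w : ℕ → (Euc 2) × ℝ) (k i : ℕ) : Set (Euc 2) :=
  {x : Euc 2 | 0 < σ * (x 1 - c₀) ∧ (∀ j, j < i → 0 < cutG w j x) ∧ (i < k → cutG w i x < 0)}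

lemma partP_eq (c₀ σ : ℝ) (w : ℕ → (Euc 2) × ℝ) (k i : ℕ) :
    partP c₀ σ w k i = {x : Euc 2 | 0 ≤ σ * (x 1 - c₀)}
      ∩ ((⋂ (j : ℕ) (_ : j < i), {x : Euc 2 | 0 ≤ cutG w j x})
      ∩ ⋂ (_ : i < k), {x : Euc 2 | cutG w i x ≤ 0}) := by
  ext x
  simp [partP, mem_iInter]

lemma partP_closed (c₀ σ : ℝ) (w : ℕ → (Euc 2) × ℝ) (k i : ℕ) :
    IsClosed (partP c₀ σ w k i) := by
  rw [partP_eq]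
  refine (isClosed_le continuous_const (continuous_const.mul (cont_coord.sub
    continuous_const))).inter (IsClosed.inter ?_ ?_)
  · exact isClosed_iInter fun j => isClosed_iInter fun _ =>
      isClosed_le continuous_const (cont_cutG w j)
  · exact isClosed_iInter fun _ => isClosed_le (cont_cutG w i) continuous_const

lemma convex_halfLe (w : ℕ → (Euc 2) × ℝ) (j : ℕ) : Convex ℝ {x : Euc 2 | cutG w j x ≤ 0} := by
  intro x hx y hy a b ha hb hab
  simp only [mem_setOf_eq, cutG, inner_add_right, inner_smul_right] at *
  have habs : a * (w j).2 + b * (w j).2 = (w j).2 := by rw [← add_mul, hab, one_mul]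
  nlinarith [mul_nonneg ha (neg_nonneg.mpr hx), mul_nonneg hb (neg_nonneg.mpr hy), habs]

lemma convex_sigma (c₀ σ : ℝ) : Convex ℝ {x : Euc 2 | 0 ≤ σ * (x 1 - c₀)} := by
  have h := convex_halfGe (fun _ => (σ • EuclideanSpace.single 1 (1:ℝ), σ * c₀)) 0
  have he : {x : Euc 2 | 0 ≤ cutG (fun _ => (σ • EuclideanSpace.single 1 (1:ℝ), σ * c₀)) 0 x}
      = {x : Euc 2 | 0 ≤ σ * (x 1 - c₀)} := by
    ext x
    simp only [cutG, mem_setOf_eq, real_inner_smul_left, inner_e1]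
    constructor <;> intro h' <;> nlinarith
  rwa [he] at h

lemma partP_convex (c₀ σ : ℝ) (w : ℕ → (Euc 2) × ℝ) (k i : ℕ) :
    Convex ℝ (partP c₀ σ w k i) := by
  rw [partP_eq]
  exact (convex_sigma c₀ σ).inter ((convex_iInter fun j => convex_iInter fun _ =>
    convex_halfGe w j).inter (convex_iInter fun _ => convex_halfLe w i))

lemma interior_partP_subset {c₀ σ : ℝ} (hσ : σ ≠ 0) {w : ℕ → (Euc 2) × ℝ} {k : ℕ}
    (hnorm : ∀ j, j < k → (w j).1 ≠ 0) {i : ℕ} (hi : i ≤ k) :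
    interior (partP c₀ σ w k i) ⊆ partO c₀ σ w k i := by
  intro x hx
  refine ⟨?_, ?_, ?_⟩
  · have hν : σ • EuclideanSpace.single 1 (1:ℝ) ≠ (0 : Euc 2) := smul_ne_zero hσ e1_ne
    have h := interior_strict hx hν (r := σ * c₀) (fun y hy => by
      rw [real_inner_smul_left, inner_e1]
      nlinarith [hy.1])
    rw [real_inner_smul_left, inner_e1] at h
    nlinarith
  · intro j hj
    have hν : (w j).1 ≠ 0 := hnorm j (lt_of_lt_of_le hj hi)
    have h := interior_strict hx hν (r := (w j).2) (fun y hy => by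
      have := hy.2.1 j hj
      simp only [cutG] at this
      linarith)
    simp only [cutG]
    linarith
  · intro hik
    have hν : -(w i).1 ≠ 0 := neg_ne_zero.mpr (hnorm i hik)
    have h := interior_strict hx hν (r := -(w i).2) (fun y hy => by
      have := hy.2.2 hik
      simp only [cutG] at this
      rw [inner_neg_left]
      linarith)
    rw [inner_neg_left] at h
    simp only [cutG]
    linarith
lemma affine_combo (ν : Euc 2) (sν : ℝ) (x x' : Euc 2) (τ : ℝ) :
    (⟪ν, x + τ • (x' - x)⟫ - sν) = (1 - τ) * (⟪ν, x⟫ - sν) + τ * (⟪ν, x'⟫ - sν) := by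
  rw [inner_add_right, inner_smul_right, inner_sub_right]
  ring

def Wside (c₀ σ : ℝ) (w : ℕ → (Euc 2) × ℝ) (k : ℕ) (v : Euc 2) (c : ℝ) : Set ℕ :=
  {j : ℕ | j < k ∧ (∃ z : Euc 2, ⟪v, z⟫ = c ∧ cutG w j z = 0 ∧ 0 < σ * (z 1 - c₀)) ∧
    ∃ p : Euc 2, ⟪v, p⟫ = c ∧ cutG w j p ≠ 0}

lemma count_side {c₀ σ : ℝ} (hσ : σ ≠ 0) {w : ℕ → (Euc 2) × ℝ} {k : ℕ}
    (hnorm : ∀ j, j < k → (w j).1 ≠ 0) (v : Euc 2) (c : ℝ) :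
    {i : ℕ | i ≤ k ∧ ({x : Euc 2 | ⟪v, x⟫ = c} ∩ interior (partP c₀ σ w k i)).Nonempty}.ncard
      ≤ (Wside c₀ σ w k v c).ncard + 1 := by
  set A := {i : ℕ | i ≤ k ∧
    ({x : Euc 2 | ⟪v, x⟫ = c} ∩ interior (partP c₀ σ w k i)).Nonempty} with hAdef
  have hWfin : (Wside c₀ σ w k v c).Finite := (Set.finite_Iio k).subset (fun j hj => hj.1)
  rcases Set.eq_empty_or_nonempty A with hemp | hne
  · rw [hemp, Set.ncard_empty]
    omega
  · have hbdd : BddAbove A := ⟨k, fun x hx => hx.1⟩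
    set M := sSup A with hMdef
    have hM : M ∈ A := Nat.sSup_mem hne hbdd
    have hsub : A ⊆ insert M (Wside c₀ σ w k v c) := by
      intro i hi
      rcases eq_or_ne i M with rfl | hneq
      · exact mem_insert _ _
      apply mem_insert_of_mem
      have hiM : i < M := lt_of_le_of_ne (le_csSup hbdd hi) hneq
      have hik : i < k := lt_of_lt_of_le hiM hM.1
      obtain ⟨x, hxHP, hxI⟩ := hi.2
      obtain ⟨x', hx'HP, hx'I⟩ := hM.2
      have hxO := interior_partP_subset hσ hnorm hi.1 hxI
      have hx'O := interior_partP_subset hσ hnorm hM.1 hx'I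
      have hx1 : ⟪v, x⟫ = c := hxHP
      have hx'1 : ⟪v, x'⟫ = c := hx'HP
      have ha : cutG w i x < 0 := hxO.2.2 hik
      have hb : 0 < cutG w i x' := hx'O.2.1 i hiM
      have hab : cutG w i x - cutG w i x' < 0 := by linarith
      set τ := cutG w i x / (cutG w i x - cutG w i x') with hτdef
      have hτ0 : 0 < τ := div_pos_iff.mpr (Or.inr ⟨ha, hab⟩)
      have hmc : τ * (cutG w i x - cutG w i x') = cutG w i x :=
        div_mul_cancel₀ _ (ne_of_lt hab)
      have hτ1 : τ < 1 := by
        by_contra hcon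
        push_neg at hcon
        have h2 := mul_le_mul_of_nonpos_right hcon (le_of_lt hab)
        rw [one_mul, hmc] at h2
        linarith
      set z := x + τ • (x' - x) with hzdef
      have hzHP : ⟪v, z⟫ = c := by
        have h := affine_combo v c x x' τ
        rw [hx1, hx'1] at h
        simp only [hzdef] at *
        linarith [h]
      have hzG : cutG w i z = 0 := by
        have h : cutG w i z = (1 - τ) * (cutG w i x) + τ * (cutG w i x') :=
          affine_combo (w i).1 (w i).2 x x' τ
        rw [h]
        linear_combination -hmc
      have hz1 : 0 < σ * (z 1 - c₀) := by
        have hz1v : z 1 = x 1 + τ * (x' 1 - x 1) := by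
          simp [hzdef, PiLp.add_apply, PiLp.smul_apply, PiLp.sub_apply]
        have h1 : 0 < (1 - τ) * (σ * (x 1 - c₀)) := mul_pos (by linarith) hxO.1
        have h2 : 0 < τ * (σ * (x' 1 - c₀)) := mul_pos hτ0 hx'O.1
        rw [hz1v]
        nlinarith [h1, h2]
      exact ⟨hik, ⟨z, hzHP, hzG, hz1⟩, ⟨x, hx1, ne_of_lt ha⟩⟩
    calc A.ncard ≤ (insert M (Wside c₀ σ w k v c)).ncard :=
          Set.ncard_le_ncard hsub (hWfin.insert M)
      _ ≤ (Wside c₀ σ w k v c).ncard + 1 := Set.ncard_insert_le M _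

lemma Wside_disjoint {c₀ : ℝ} {w : ℕ → (Euc 2) × ℝ} {k : ℕ} {v : Euc 2} (hv : v ≠ 0) (c : ℝ) :
    Disjoint (Wside c₀ 1 w k v c) (Wside c₀ (-1) w k v c) := by
  rw [Set.disjoint_left]
  rintro j ⟨hjk, ⟨z, hz, hzG, hz1⟩, p, hp, hpG⟩ ⟨-, ⟨z', hz', hzG', hz1'⟩, -⟩
  have hzc : c₀ < z 1 := by nlinarith
  have hz'c : z' 1 < c₀ := by nlinarith
  have hzz' : z' - z ≠ 0 := by
    intro h0
    have := congrArg (fun u : Euc 2 => u 1) h0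
    simp only [PiLp.sub_apply, PiLp.zero_apply] at this
    linarith
  have hpz : ⟪v, p - z⟫ = 0 := by rw [inner_sub_right, hp, hz]; ring
  have hzz : ⟪v, z' - z⟫ = 0 := by rw [inner_sub_right, hz', hz]; ring
  obtain ⟨t, ht⟩ := perp_parallel hv hpz hzz hzz'
  have hc := congrArg (fun u : Euc 2 => ⟪(w j).1, u⟫) ht
  simp only [inner_sub_right, inner_smul_right] at hc
  apply hpG
  simp only [cutG] at hzG hzG' ⊢
  linear_combination hc + hzG + t * hzG' - t * hzG
lemma partP_cover {c₀ σ : ℝ} (w : ℕ → (Euc 2) × ℝ) (k : ℕ) (x : Euc 2)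
    (hx : 0 ≤ σ * (x 1 - c₀)) : ∃ i, i ≤ k ∧ x ∈ partP c₀ σ w k i := by
  by_cases h : ∃ j, j < k ∧ cutG w j x ≤ 0
  · have hspec := Nat.find_spec h
    refine ⟨Nat.find h, le_of_lt hspec.1, hx, ?_, fun _ => hspec.2⟩
    intro j hj
    have hmin := Nat.find_min h hj
    have hjk : j < k := lt_trans hj hspec.1
    exact le_of_lt (not_le.mp (not_and.mp hmin hjk))
  · refine ⟨k, le_rfl, hx, ?_, fun hkk => absurd hkk (lt_irrefl k)⟩
    intro j hj
    have hna : ¬(j < k ∧ cutG w j x ≤ 0) := fun hc => h ⟨j, hc⟩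
    exact le_of_lt (not_le.mp (not_and.mp hna hj))

lemma partP_eq_lt {c₀ : ℝ} {w : ℕ → (Euc 2) × ℝ} {k i : ℕ} (hik : i < k) :
    partP c₀ 1 w k i = regS {x : Euc 2 | c₀ ≤ x 1} w i ∩ {x : Euc 2 | cutG w i x ≤ 0} := by
  ext x
  simp only [partP, regS, mem_inter_iff, mem_setOf_eq]
  constructor
  · rintro ⟨h1, h2, h3⟩
    exact ⟨⟨by linarith, h2⟩, h3 hik⟩
  · rintro ⟨⟨h1, h2⟩, h3⟩
    exact ⟨by linarith, h2, fun _ => h3⟩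

lemma partP_eq_lt' {c₀ : ℝ} {w : ℕ → (Euc 2) × ℝ} {k i : ℕ} (hik : i < k) :
    partP c₀ (-1) w k i = regS {x : Euc 2 | x 1 ≤ c₀} w i ∩ {x : Euc 2 | cutG w i x ≤ 0} := by
  ext x
  simp only [partP, regS, mem_inter_iff, mem_setOf_eq]
  constructor
  · rintro ⟨h1, h2, h3⟩
    exact ⟨⟨by linarith, h2⟩, h3 hik⟩
  · rintro ⟨⟨h1, h2⟩, h3⟩
    exact ⟨by linarith, h2, fun _ => h3⟩

lemma partP_eq_top {c₀ : ℝ} {w : ℕ → (Euc 2) × ℝ} {k : ℕ} :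
    partP c₀ 1 w k k = regS {x : Euc 2 | c₀ ≤ x 1} w k := by
  ext x
  simp only [partP, regS, mem_setOf_eq]
  constructor
  · rintro ⟨h1, h2, -⟩
    exact ⟨by linarith, h2⟩
  · rintro ⟨h1, h2⟩
    exact ⟨by linarith, h2, fun hkk => absurd hkk (lt_irrefl k)⟩

lemma partP_eq_top' {c₀ : ℝ} {w : ℕ → (Euc 2) × ℝ} {k : ℕ} :
    partP c₀ (-1) w k k = regS {x : Euc 2 | x 1 ≤ c₀} w k := by
  ext x
  simp only [partP, regS, mem_setOf_eq]
  constructor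
  · rintro ⟨h1, h2, -⟩
    exact ⟨by linarith, h2⟩
  · rintro ⟨h1, h2⟩
    exact ⟨by linarith, h2, fun hkk => absurd hkk (lt_irrefl k)⟩

lemma partO_disjoint_same {c₀ σ : ℝ} {w : ℕ → (Euc 2) × ℝ} {k i j : ℕ}
    (hij : i < j) (hjk : j ≤ k) : partO c₀ σ w k i ∩ partO c₀ σ w k j = ∅ := by
  ext x
  simp only [mem_inter_iff, mem_empty_iff_false, iff_false, not_and]
  rintro ⟨-, -, h3⟩ ⟨-, h2', -⟩
  have h1 := h3 (lt_of_lt_of_le hij hjk)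
  have h2 := h2' i hij
  linarith

lemma partO_disjoint_cross {c₀ : ℝ} {w : ℕ → (Euc 2) × ℝ} {k i j : ℕ} :
    partO c₀ 1 w k i ∩ partO c₀ (-1) w k j = ∅ := by
  ext x
  simp only [mem_inter_iff, mem_empty_iff_false, iff_false, not_and]
  rintro ⟨h1, -, -⟩ ⟨h2, -, -⟩
  nlinarith

/-- Corollary: any nice measure on ℝ² admits a convex equipartition into 2k+2 parts such
that every line avoids at least k of the parts. -/
theorem N2_le_two_k_add_two (k : ℕ) (hk : 1 ≤ k) (μ : Measure (Euc 2))
    (hμ : NiceMeasure 2 μ) :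
    ∃ C : Fin (2 * k + 2) → Set (Euc 2), IsEquipartition μ k C := by
  obtain ⟨c₀, hlo, hup⟩ := halving_exists hμ
  obtain ⟨w, hw1, hw2, hw3⟩ := cuts_exist hμ k hlo hup k le_rfl
  set T : ℝ := 1/(2*(k:ℝ)+2) with hTdef
  have hk2 : (0:ℝ) < 2*(k:ℝ)+2 := by positivity
  have hTpos : 0 < T := by rw [hTdef]; positivity
  have hTval : ((k:ℝ)+1) * T = 1/2 := by
    rw [hTdef]; field_simp
  have hsum : ∀ l : ℕ, l ≤ k → (l:ℝ) * T ≤ 1/2 := by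
    intro l hl
    have hcast : (l:ℝ) ≤ (k:ℝ) := Nat.cast_le.mpr hl
    nlinarith [hTpos]
  have hwne : ∀ j, j < k → (w j).1 ≠ 0 := by
    intro j hj h
    have h2 := hw1 j hj
    rw [h, norm_zero] at h2
    norm_num at h2
  have hmeasU := regS_measure hμ (upper_closed c₀).measurableSet hTpos.le hup hw1 hw2 hsum
  have hmeasL := regS_measure hμ (lower_closed c₀).measurableSet hTpos.le hlo hw1 hw3 hsum
  have hpartU : ∀ i, i ≤ k → μ (partP c₀ 1 w k i) = ENNReal.ofReal T := by
    intro i hi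
    rcases lt_or_eq_of_le hi with hik | rfl
    · rw [partP_eq_lt hik]
      exact hw2 i hik
    · rw [partP_eq_top, hmeasU i le_rfl]
      congr 1
      nlinarith [hTval]
  have hpartL : ∀ i, i ≤ k → μ (partP c₀ (-1) w k i) = ENNReal.ofReal T := by
    intro i hi
    rcases lt_or_eq_of_le hi with hik | rfl
    · rw [partP_eq_lt' hik]
      exact hw3 i hik
    · rw [partP_eq_top', hmeasL i le_rfl]
      congr 1
      nlinarith [hTval]
  have hTinv : ENNReal.ofReal T = ((2*k+2 : ℕ) : ℝ≥0∞)⁻¹ := by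
    rw [hTdef, one_div, ENNReal.ofReal_inv_of_pos hk2]
    congr 1
    rw [show (2*(k:ℝ)+2) = ((2*k+2 : ℕ) : ℝ) by push_cast; ring]
    exact ENNReal.ofReal_natCast _
  set C : Fin (2*k+2) → Set (Euc 2) := fun i =>
    if (i : ℕ) ≤ k then partP c₀ 1 w k (i:ℕ) else partP c₀ (-1) w k ((i:ℕ) - (k+1))
    with hCdef
  have hCU : ∀ i : Fin (2*k+2), (i:ℕ) ≤ k → C i = partP c₀ 1 w k (i:ℕ) := by
    intro i hi
    rw [hCdef]
    exact if_pos hi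
  have hCL : ∀ i : Fin (2*k+2), ¬((i:ℕ) ≤ k) → C i = partP c₀ (-1) w k ((i:ℕ) - (k+1)) := by
    intro i hi
    rw [hCdef]
    exact if_neg hi
  have hCO : ∀ i : Fin (2*k+2), (i:ℕ) ≤ k →
      interior (C i) ⊆ partO c₀ 1 w k (i:ℕ) := by
    intro i hi
    rw [hCU i hi]
    exact interior_partP_subset one_ne_zero hwne hi
  have hCO' : ∀ i : Fin (2*k+2), ¬((i:ℕ) ≤ k) →
      interior (C i) ⊆ partO c₀ (-1) w k ((i:ℕ) - (k+1)) := by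
    intro i hi
    rw [hCL i hi]
    exact interior_partP_subset (neg_ne_zero.mpr one_ne_zero) hwne (by omega)
  refine ⟨C, ⟨?_, ?_, ?_, ?_⟩, ?_, ?_⟩
  · -- closed
    intro i
    rw [hCdef]
    dsimp only
    split_ifs <;> exact partP_closed _ _ _ _ _
  · -- convex
    intro i
    rw [hCdef]
    dsimp only
    split_ifs <;> exact partP_convex _ _ _ _ _
  · -- interiors disjoint
    intro i j hij
    rw [eq_empty_iff_forall_notMem]
    rintro x ⟨hxi, hxj⟩
    by_cases hi : (i:ℕ) ≤ k <;> by_cases hj : (j:ℕ) ≤ k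
    · have h1 := hCO i hi hxi
      have h2 := hCO j hj hxj
      have hne : (i:ℕ) ≠ (j:ℕ) := fun h => hij (Fin.val_injective h)
      rcases lt_or_gt_of_ne hne with h | h
      · exact (eq_empty_iff_forall_notMem.mp (partO_disjoint_same h hj)) x ⟨h1, h2⟩
      · exact (eq_empty_iff_forall_notMem.mp (partO_disjoint_same h hi)) x ⟨h2, h1⟩
    · have h1 := hCO i hi hxi
      have h2 := hCO' j hj hxj
      exact (eq_empty_iff_forall_notMem.mp partO_disjoint_cross) x ⟨h1, h2⟩
    · have h1 := hCO' i hi hxi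
      have h2 := hCO j hj hxj
      exact (eq_empty_iff_forall_notMem.mp partO_disjoint_cross) x ⟨h2, h1⟩
    · have h1 := hCO' i hi hxi
      have h2 := hCO' j hj hxj
      have hne : (i:ℕ) - (k+1) ≠ (j:ℕ) - (k+1) := by
        have hib := i.isLt
        have hjb := j.isLt
        intro h
        apply hij
        apply Fin.val_injective
        omega
      rcases lt_or_gt_of_ne hne with h | h
      · exact (eq_empty_iff_forall_notMem.mp (partO_disjoint_same h (by omega))) x ⟨h1, h2⟩
      · exact (eq_empty_iff_forall_notMem.mp (partO_disjoint_same h (by omega))) x ⟨h2, h1⟩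
  · -- union
    rw [eq_univ_iff_forall]
    intro x
    rw [mem_iUnion]
    rcases le_total c₀ (x 1) with h | h
    · obtain ⟨i, hik, hmem⟩ := partP_cover (σ := 1) (c₀ := c₀) w k x (by linarith)
      refine ⟨⟨i, by omega⟩, ?_⟩
      have : ((⟨i, by omega⟩ : Fin (2*k+2)) : ℕ) = i := rfl
      rw [hCU _ (by rw [this]; exact hik), this]
      exact hmem
    · obtain ⟨i, hik, hmem⟩ := partP_cover (σ := -1) (c₀ := c₀) w k x (by nlinarith)
      refine ⟨⟨k+1+i, by omega⟩, ?_⟩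
      have hv : ((⟨k+1+i, by omega⟩ : Fin (2*k+2)) : ℕ) = k+1+i := rfl
      rw [hCL _ (by omega)]
      have : ((⟨k+1+i, by omega⟩ : Fin (2*k+2)) : ℕ) - (k+1) = i := by omega
      rw [this]
      exact hmem
  · -- measures
    intro i
    rw [← hTinv]
    by_cases hi : (i:ℕ) ≤ k
    · rw [hCU i hi]
      exact hpartU _ hi
    · rw [hCL i hi]
      have hib := i.isLt
      exact hpartL _ (by omega)
  · -- avoidance
    intro v c hv
    set Met := {i : Fin (2*k+2) | ¬ Avoids (Hyperplane v c) (C i)} with hMetdef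
    have hMetbound : Met.ncard ≤ k + 2 := by
      set AU := {i : ℕ | i ≤ k ∧
        ({x : Euc 2 | ⟪v, x⟫ = c} ∩ interior (partP c₀ 1 w k i)).Nonempty} with hAUdef
      set AL := {i : ℕ | i ≤ k ∧
        ({x : Euc 2 | ⟪v, x⟫ = c} ∩ interior (partP c₀ (-1) w k i)).Nonempty} with hALdef
      have hAUfin : AU.Finite := (Set.finite_Iic k).subset (fun i hi => hi.1)
      have hALfin : AL.Finite := (Set.finite_Iic k).subset (fun i hi => hi.1)
      have hHP : Hyperplane v c = {x : Euc 2 | ⟪v, x⟫ = c} := rfl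
      set M1 := {i : Fin (2*k+2) | i ∈ Met ∧ (i:ℕ) ≤ k} with hM1def
      set M2 := {i : Fin (2*k+2) | i ∈ Met ∧ ¬((i:ℕ) ≤ k)} with hM2def
      have hMsplit : Met = M1 ∪ M2 := by
        ext i
        simp only [hM1def, hM2def, mem_union, mem_setOf_eq]
        tauto
      have hM1 : M1.ncard ≤ AU.ncard := by
        have hmap : ∀ i ∈ M1, ((i:ℕ) : ℕ) ∈ AU := by
          rintro i ⟨hiMet, hile⟩
          refine ⟨hile, ?_⟩
          have hne := Set.nonempty_iff_ne_empty.mpr hiMet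
          rwa [hHP, hCU i hile] at hne
        have hinj : Set.InjOn (fun i : Fin (2*k+2) => (i:ℕ)) M1 :=
          Fin.val_injective.injOn.mono (fun i _ => trivial)
        exact Set.ncard_le_ncard_of_injOn _ hmap hinj hAUfin
      have hM2 : M2.ncard ≤ AL.ncard := by
        have hmap : ∀ i ∈ M2, (i:ℕ) - (k+1) ∈ AL := by
          rintro i ⟨hiMet, hile⟩
          have hib := i.isLt
          refine ⟨by omega, ?_⟩
          have hne := Set.nonempty_iff_ne_empty.mpr hiMet
          rwa [hHP, hCL i hile] at hne
        have hinj : Set.InjOn (fun i : Fin (2*k+2) => (i:ℕ) - (k+1)) M2 := by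
          rintro i ⟨-, hi⟩ j ⟨-, hj⟩ h
          have hib := i.isLt
          have hjb := j.isLt
          apply Fin.val_injective
          simp only at h
          omega
        exact Set.ncard_le_ncard_of_injOn _ hmap hinj hALfin
      have hcount1 := count_side (c₀ := c₀) one_ne_zero hwne v c
      have hcount2 := count_side (c₀ := c₀) (neg_ne_zero.mpr one_ne_zero) hwne v c
      have hWdisj := Wside_disjoint (c₀ := c₀) (w := w) (k := k) hv c
      have hWUfin : (Wside c₀ 1 w k v c).Finite :=
        (Set.finite_Iio k).subset (fun j hj => hj.1)
      have hWLfin : (Wside c₀ (-1) w k v c).Finite :=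
        (Set.finite_Iio k).subset (fun j hj => hj.1)
      have hWsum : (Wside c₀ 1 w k v c).ncard + (Wside c₀ (-1) w k v c).ncard ≤ k := by
        rw [← Set.ncard_union_eq hWdisj hWUfin hWLfin]
        have hsub : Wside c₀ 1 w k v c ∪ Wside c₀ (-1) w k v c ⊆ Set.Iio k := by
          rintro j (hj | hj) <;> exact hj.1
        calc (Wside c₀ 1 w k v c ∪ Wside c₀ (-1) w k v c).ncard
            ≤ (Set.Iio k).ncard := Set.ncard_le_ncard hsub (Set.finite_Iio k)
          _ = k := by rw [← Finset.coe_Iio, Set.ncard_coe_finset, Nat.card_Iio]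
      calc Met.ncard ≤ M1.ncard + M2.ncard := by
            rw [hMsplit]
            exact Set.ncard_union_le _ _
        _ ≤ AU.ncard + AL.ncard := Nat.add_le_add hM1 hM2
        _ ≤ ((Wside c₀ 1 w k v c).ncard + 1) + ((Wside c₀ (-1) w k v c).ncard + 1) :=
            Nat.add_le_add hcount1 hcount2
        _ ≤ k + 2 := by omega
    have hcompl : Met.ncard + Metᶜ.ncard = 2*k+2 := by
      rw [Set.ncard_add_ncard_compl]
      simp
    have hAvoidEq : {i : Fin (2*k+2) | Avoids (Hyperplane v c) (C i)} = Metᶜ := by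
      ext i
      simp [hMetdef, not_not]
    rw [hAvoidEq]
    omega
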